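/- Let L_K, L_W, S_K, S_W, D_K, D_W be admissible functions with L's and D's non-increasing and S's non-decreasing, and fix M₀ ∈ ℕ. Define F(I; M₀) = L_K(|I|)S_K(|I|)D_K(rdist(I,𝔹)) + L_W(2^{−M₀}|I|)S_W(2^{M₀}|I|)D_W(M₀^{−1} rdist(I, 𝔹_{2^{M₀}})). Then for every ε > 0 there exists M₁ > M₀ such that for all M > M₁ and every interval I not in 𝓘_M (i.e., |I| > 2^M, or |I| < 2^{−M}, or 2^{−M} ≤ |I| ≤ 2^M with rdist(I, 𝔹_{2^M}) > M), one has F(I; M₀) ≲ ε. -/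

import Mathlib

open Filter

/-- A set of admissible functions: bounded, nonnegative, with the limits
`L(x) → 0` as `x → ∞`, `S(x) → 0` as `x → 0`, `D(x) → 0` as `x → ∞`. -/
def Admissible (L S D : ℝ → ℝ) : Prop :=
  (∀ x, 0 ≤ L x) ∧ (∀ x, 0 ≤ S x) ∧ (∀ x, 0 ≤ D x) ∧
  (∃ B : ℝ, ∀ x, L x ≤ B ∧ S x ≤ B ∧ D x ≤ B) ∧
  Tendsto L atTop (nhds 0) ∧
  Tendsto S (nhdsWithin 0 (Set.Ioi 0)) (nhds 0) ∧
  Tendsto D atTop (nhds 0)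

/-- `diam(I ∪ J)` for intervals given by centers and lengths. -/
noncomputable def diamUnion (c1 l1 c2 l2 : ℝ) : ℝ :=
  max (c1 + l1 / 2) (c2 + l2 / 2) - min (c1 - l1 / 2) (c2 - l2 / 2)

/-- The relative distance `rdist(I,J) = diam(I ∪ J)/max(|I|,|J|)`. -/
noncomputable def rdistI (c1 l1 c2 l2 : ℝ) : ℝ := diamUnion c1 l1 c2 l2 / max l1 l2

set_option maxHeartbeats 1000000

lemma abs_le_diamUnion (c l lam : ℝ) (hl : 0 ≤ l) (hlam : 0 ≤ lam) :
    |c| ≤ diamUnion c l 0 lam := by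
  unfold diamUnion
  rcases abs_cases c with ⟨h, _⟩ | ⟨h, _⟩ <;> rw [h] <;>
  · have h1 := le_max_left (c + l / 2) (0 + lam / 2)
    have h2 := le_max_right (c + l / 2) (0 + lam / 2)
    have h3 := min_le_left (c - l / 2) (0 - lam / 2)
    have h4 := min_le_right (c - l / 2) (0 - lam / 2)
    linarith

lemma diamUnion_le (c l lam : ℝ) (hl : 0 ≤ l) (hlam : 0 ≤ lam) :
    diamUnion c l 0 lam ≤ 2 * |c| + l + lam := by
  unfold diamUnion
  have h1 := le_abs_self c
  have h2 := neg_abs_le c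
  have hmax : max (c + l / 2) (0 + lam / 2) ≤ |c| + l / 2 + lam / 2 :=
    max_le (by linarith) (by linarith [abs_nonneg c])
  have hmin : -(|c| + l / 2 + lam / 2) ≤ min (c - l / 2) (0 - lam / 2) :=
    le_min (by linarith) (by linarith [abs_nonneg c])
  linarith

lemma prod3_le {a b c B ε : ℝ} (ha : 0 ≤ a) (hb : 0 ≤ b) (hc : 0 ≤ c)
    (haB : a ≤ B) (hbB : b ≤ B) (hcB : c ≤ B) (hε : 0 ≤ ε)
    (h : a ≤ ε ∨ b ≤ ε ∨ c ≤ ε) : a * b * c ≤ B ^ 2 * ε := by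
  have hB : 0 ≤ B := le_trans ha haB
  rcases h with h | h | h
  · calc a * b * c = a * (b * c) := by ring
      _ ≤ ε * (B * B) := mul_le_mul h (mul_le_mul hbB hcB hc hB) (mul_nonneg hb hc) hε
      _ = B ^ 2 * ε := by ring
  · calc a * b * c = b * (a * c) := by ring
      _ ≤ ε * (B * B) := mul_le_mul h (mul_le_mul haB hcB hc hB) (mul_nonneg ha hc) hε
      _ = B ^ 2 * ε := by ring
  · calc a * b * c = c * (a * b) := by ring
      _ ≤ ε * (B * B) := mul_le_mul h (mul_le_mul haB hbB hb hB) (mul_nonneg ha hb) hε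
      _ = B ^ 2 * ε := by ring

/-- For monotone admissible functions and fixed `M₀`, the quantity
`F(I;M₀) = L_K(|I|)S_K(|I|)D_K(rdist(I,𝔹)) +
L_W(2^{−M₀}|I|)S_W(2^{M₀}|I|)D_W(M₀⁻¹ rdist(I,𝔹_{2^{M₀}}))`
satisfies `F(I;M₀) ≲ ε` for all intervals `I ∉ 𝓘_M`, once `M` is large enough. -/
theorem statement18 (LK SK DK LW SW DW : ℝ → ℝ)
    (hK : Admissible LK SK DK) (hW : Admissible LW SW DW)
    (hLKmono : ∀ x y : ℝ, x ≤ y → LK y ≤ LK x)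
    (hSKmono : ∀ x y : ℝ, x ≤ y → SK x ≤ SK y)
    (hDKmono : ∀ x y : ℝ, x ≤ y → DK y ≤ DK x)
    (hLWmono : ∀ x y : ℝ, x ≤ y → LW y ≤ LW x)
    (hSWmono : ∀ x y : ℝ, x ≤ y → SW x ≤ SW y)
    (hDWmono : ∀ x y : ℝ, x ≤ y → DW y ≤ DW x)
    (M₀ : ℕ) (hM₀ : 1 ≤ M₀) :
    ∃ C' > 0, ∀ ε > 0, ∃ M₁ : ℕ, M₀ < M₁ ∧ ∀ M : ℕ, M₁ < M →
      ∀ c l : ℝ, 0 < l →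
        ((2 : ℝ) ^ M < l ∨ l < (2 : ℝ) ^ (-(M : ℤ)) ∨
          ((2 : ℝ) ^ (-(M : ℤ)) ≤ l ∧ l ≤ 2 ^ M ∧
            (M : ℝ) < rdistI c l 0 (2 ^ M))) →
        LK l * SK l * DK (rdistI c l 0 1) +
            LW ((2 : ℝ) ^ (-(M₀ : ℤ)) * l) * SW ((2 : ℝ) ^ M₀ * l) *
              DW ((M₀ : ℝ)⁻¹ * rdistI c l 0 (2 ^ M₀))
          ≤ C' * ε := by
  obtain ⟨hLK0, hSK0, hDK0, ⟨BK, hBK⟩, hLKt, hSKt, hDKt⟩ := hK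
  obtain ⟨hLW0, hSW0, hDW0, ⟨BW, hBW⟩, hLWt, hSWt, hDWt⟩ := hW
  set B : ℝ := max (max BK BW) 1 with hBdef
  have hB1 : (1:ℝ) ≤ B := le_max_right _ _
  have hB0 : (0:ℝ) ≤ B := by linarith
  have hBKle : BK ≤ B := le_trans (le_max_left _ _) (le_max_left _ _)
  have hBWle : BW ≤ B := le_trans (le_max_right _ _) (le_max_left _ _)
  have hLKB : ∀ x, LK x ≤ B := fun x => ((hBK x).1).trans hBKle
  have hSKB : ∀ x, SK x ≤ B := fun x => ((hBK x).2.1).trans hBKle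
  have hDKB : ∀ x, DK x ≤ B := fun x => ((hBK x).2.2).trans hBKle
  have hLWB : ∀ x, LW x ≤ B := fun x => ((hBW x).1).trans hBWle
  have hSWB : ∀ x, SW x ≤ B := fun x => ((hBW x).2.1).trans hBWle
  have hDWB : ∀ x, DW x ≤ B := fun x => ((hBW x).2.2).trans hBWle
  refine ⟨2 * B ^ 2, by nlinarith, ?_⟩
  intro ε hε
  obtain ⟨aLK, haLK⟩ := (hLKt.eventually_lt_const hε).exists
  obtain ⟨aDK, haDK⟩ := (hDKt.eventually_lt_const hε).exists
  obtain ⟨aLW, haLW⟩ := (hLWt.eventually_lt_const hε).exists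
  obtain ⟨aDW, haDW⟩ := (hDWt.eventually_lt_const hε).exists
  obtain ⟨sK, hsKlt, hsKpos⟩ :=
    ((hSKt.eventually_lt_const hε).and eventually_mem_nhdsWithin).exists
  obtain ⟨sW, hsWlt, hsWpos⟩ :=
    ((hSWt.eventually_lt_const hε).and eventually_mem_nhdsWithin).exists
  have hsK : (0:ℝ) < sK := hsKpos
  have hsW : (0:ℝ) < sW := hsWpos
  refine ⟨M₀ + 3 + ⌈aLK⌉₊ + ⌈aLW⌉₊ + ⌈sK⁻¹⌉₊ + ⌈sW⁻¹⌉₊ + ⌈2*aDK⌉₊ + ⌈2*(M₀:ℝ)*aDW⌉₊,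
    by omega, ?_⟩
  intro M hM c l hl hcase
  have hMM₀ : M₀ < M := by omega
  have h2M_pos : (0:ℝ) < (2:ℝ)^M := by positivity
  have hMle2M : ∀ n : ℕ, (n:ℝ) ≤ (2:ℝ)^n := by
    intro n
    calc (n:ℝ) ≤ ((2^n : ℕ):ℝ) := by exact_mod_cast (Nat.lt_two_pow_self (n := n)).le
      _ = (2:ℝ)^n := by push_cast; ring
  have hMceil : ∀ a : ℝ, ⌈a⌉₊ ≤ M → a ≤ (M:ℝ) := fun a h =>
    (Nat.le_ceil a).trans (by exact_mod_cast h)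
  have h12M : (1:ℝ) ≤ (2:ℝ)^M := by exact_mod_cast Nat.one_le_two_pow
  set k : ℕ := M - M₀ with hkdef
  have hk : M = M₀ + k := by omega
  have hM₀pos : (0:ℝ) < (M₀:ℝ) := by exact_mod_cast hM₀
  have hεB : LK l * SK l * DK (rdistI c l 0 1) ≤ B ^ 2 * ε ∧
      LW ((2 : ℝ) ^ (-(M₀ : ℤ)) * l) * SW ((2 : ℝ) ^ M₀ * l) *
        DW ((M₀ : ℝ)⁻¹ * rdistI c l 0 (2 ^ M₀)) ≤ B ^ 2 * ε := by
    constructor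
    · refine prod3_le (hLK0 _) (hSK0 _) (hDK0 _) (hLKB _) (hSKB _) (hDKB _) hε.le ?_
      rcases hcase with h1 | h2 | ⟨hlo, hhi, hr⟩
      · -- large scale: LK small
        left
        have haLKl : aLK ≤ l := by
          have := hMceil aLK (by omega)
          linarith [hMle2M M]
        exact (hLKmono aLK l haLKl).trans haLK.le
      · -- small scale: SK small
        right; left
        have hsKinv : sK⁻¹ ≤ (2:ℝ)^M := (hMceil sK⁻¹ (by omega)).trans (hMle2M M)
        have hone : (1:ℝ) ≤ sK * 2^M := by
          have := mul_le_mul_of_nonneg_left hsKinv hsK.le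
          rwa [mul_inv_cancel₀ hsK.ne'] at this
        have hinv : (2:ℝ)^(-(M:ℤ)) ≤ sK := by
          rw [zpow_neg, zpow_natCast]
          rw [inv_le_iff_one_le_mul₀ h2M_pos]
          linarith
        exact (hSKmono l sK (by linarith)).trans hsKlt.le
      · -- far away: DK small
        right; right
        have hmax : max l ((2:ℝ)^M) = (2:ℝ)^M := max_eq_right hhi
        rw [rdistI, hmax] at hr
        have hdlt : (M:ℝ) * 2^M < diamUnion c l 0 ((2:ℝ)^M) := by
          calc (M:ℝ)*2^M < (diamUnion c l 0 ((2:ℝ)^M) / 2^M) * 2^M :=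
                mul_lt_mul_of_pos_right hr h2M_pos
            _ = diamUnion c l 0 ((2:ℝ)^M) := div_mul_cancel₀ _ h2M_pos.ne'
        have hdle := diamUnion_le c l ((2:ℝ)^M) hl.le h2M_pos.le
        have hcbig : ((M:ℝ) - 2) * 2^M ≤ 2 * |c| := by nlinarith
        have habs := abs_le_diamUnion c l 1 hl.le zero_le_one
        have hdnn : (0:ℝ) ≤ diamUnion c l 0 1 := le_trans (abs_nonneg c) habs
        have hmax1pos : (0:ℝ) < max l 1 := lt_of_lt_of_le one_pos (le_max_right _ _)
        have hmax1 : max l (1:ℝ) ≤ (2:ℝ)^M := max_le hhi h12M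
        have hquot : |c| / (2:ℝ)^M ≤ rdistI c l 0 1 := by
          rw [rdistI]
          exact div_le_div₀ hdnn habs hmax1pos hmax1
        have h2aDK : 2*aDK + 3 ≤ (M:ℝ) := by
          have h1 : (⌈2*aDK⌉₊ : ℕ) + 3 ≤ M := by omega
          have h2 : ((⌈2*aDK⌉₊ : ℕ) : ℝ) + 3 ≤ (M:ℝ) := by exact_mod_cast h1
          linarith [Nat.le_ceil (2*aDK)]
        have haDKle : aDK ≤ rdistI c l 0 1 := by
          refine le_trans ?_ hquot
          rw [le_div_iff₀ h2M_pos]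
          nlinarith [mul_nonneg (by linarith : (0:ℝ) ≤ (M:ℝ) - 2 - 2*aDK) h2M_pos.le]
        exact (hDKmono aDK _ haDKle).trans haDK.le
    · refine prod3_le (hLW0 _) (hSW0 _) (hDW0 _) (hLWB _) (hSWB _) (hDWB _) hε.le ?_
      have hz : (2:ℝ)^(-(M₀:ℤ)) = ((2:ℝ)^M₀)⁻¹ := by rw [zpow_neg, zpow_natCast]
      have h2M₀pos : (0:ℝ) < (2:ℝ)^M₀ := by positivity
      have hsplit : (2:ℝ)^M = (2:ℝ)^M₀ * (2:ℝ)^k := by rw [hk, pow_add]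
      rcases hcase with h1 | h2 | ⟨hlo, hhi, hr⟩
      · -- large scale: LW small
        left
        have hkb : aLW ≤ ((k:ℕ):ℝ) := by
          have h1' : (⌈aLW⌉₊ : ℕ) ≤ k := by omega
          exact (Nat.le_ceil aLW).trans (by exact_mod_cast h1')
        have hargb : (2:ℝ)^k ≤ (2:ℝ)^(-(M₀:ℤ)) * l := by
          rw [hz]
          have : ((2:ℝ)^M₀)⁻¹ * (2:ℝ)^M ≤ ((2:ℝ)^M₀)⁻¹ * l :=
            mul_le_mul_of_nonneg_left h1.le (by positivity)
          calc (2:ℝ)^k = ((2:ℝ)^M₀)⁻¹ * (2:ℝ)^M := by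
                rw [hsplit]; field_simp
            _ ≤ ((2:ℝ)^M₀)⁻¹ * l := this
        have : aLW ≤ (2:ℝ)^(-(M₀:ℤ)) * l := le_trans (hkb.trans (hMle2M k)) hargb
        exact (hLWmono aLW _ this).trans haLW.le
      · -- small scale: SW small
        right; left
        have hsWinv : sW⁻¹ ≤ (2:ℝ)^k := by
          have h1' : (⌈sW⁻¹⌉₊ : ℕ) ≤ k := by omega
          exact ((Nat.le_ceil sW⁻¹).trans (by exact_mod_cast h1')).trans (hMle2M k)
        have h2k_pos : (0:ℝ) < (2:ℝ)^k := by positivity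
        have hone : (1:ℝ) ≤ sW * 2^k := by
          have := mul_le_mul_of_nonneg_left hsWinv hsW.le
          rwa [mul_inv_cancel₀ hsW.ne'] at this
        have hinvk : ((2:ℝ)^k)⁻¹ ≤ sW := by
          rw [inv_le_iff_one_le_mul₀ h2k_pos]
          linarith
        have hargs : (2:ℝ)^M₀ * l ≤ sW := by
          have hml : (2:ℝ)^M₀ * l < (2:ℝ)^M₀ * (2:ℝ)^(-(M:ℤ)) :=
            mul_lt_mul_of_pos_left h2 h2M₀pos
          have heq : (2:ℝ)^M₀ * (2:ℝ)^(-(M:ℤ)) = ((2:ℝ)^k)⁻¹ := by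
            rw [zpow_neg, zpow_natCast, hsplit]
            field_simp
          rw [heq] at hml
          linarith
        exact (hSWmono _ sW hargs).trans hsWlt.le
      · -- far away: DW small
        right; right
        have hmax : max l ((2:ℝ)^M) = (2:ℝ)^M := max_eq_right hhi
        rw [rdistI, hmax] at hr
        have hdlt : (M:ℝ) * 2^M < diamUnion c l 0 ((2:ℝ)^M) := by
          calc (M:ℝ)*2^M < (diamUnion c l 0 ((2:ℝ)^M) / 2^M) * 2^M :=
                mul_lt_mul_of_pos_right hr h2M_pos
            _ = diamUnion c l 0 ((2:ℝ)^M) := div_mul_cancel₀ _ h2M_pos.ne'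
        have hdle := diamUnion_le c l ((2:ℝ)^M) hl.le h2M_pos.le
        have hcbig : ((M:ℝ) - 2) * 2^M ≤ 2 * |c| := by nlinarith
        have habs := abs_le_diamUnion c l ((2:ℝ)^M₀) hl.le h2M₀pos.le
        have hdnn : (0:ℝ) ≤ diamUnion c l 0 ((2:ℝ)^M₀) := le_trans (abs_nonneg c) habs
        have hmaxpos : (0:ℝ) < max l ((2:ℝ)^M₀) := lt_of_lt_of_le h2M₀pos (le_max_right _ _)
        have h2M₀le : (2:ℝ)^M₀ ≤ (2:ℝ)^M :=
          by exact_mod_cast Nat.pow_le_pow_right (by norm_num) hMM₀.le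
        have hmaxle : max l ((2:ℝ)^M₀) ≤ (2:ℝ)^M := max_le hhi h2M₀le
        have hquot : |c| / (2:ℝ)^M ≤ rdistI c l 0 ((2:ℝ)^M₀) := by
          rw [rdistI]
          exact div_le_div₀ hdnn habs hmaxpos hmaxle
        have h2aDW : 2*(M₀:ℝ)*aDW + 3 ≤ (M:ℝ) := by
          have h1' : (⌈2*(M₀:ℝ)*aDW⌉₊ : ℕ) + 3 ≤ M := by omega
          have h2' : ((⌈2*(M₀:ℝ)*aDW⌉₊ : ℕ) : ℝ) + 3 ≤ (M:ℝ) := by exact_mod_cast h1'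
          linarith [Nat.le_ceil (2*(M₀:ℝ)*aDW)]
        have haDWle : aDW ≤ (M₀:ℝ)⁻¹ * rdistI c l 0 ((2:ℝ)^M₀) := by
          have hstep : (M₀:ℝ) * aDW ≤ |c| / (2:ℝ)^M := by
            rw [le_div_iff₀ h2M_pos]
            nlinarith [mul_nonneg (by linarith : (0:ℝ) ≤ (M:ℝ) - 2 - 2*(M₀:ℝ)*aDW) h2M_pos.le]
          have hstep2 : (M₀:ℝ) * aDW ≤ rdistI c l 0 ((2:ℝ)^M₀) := hstep.trans hquot
          calc aDW = (M₀:ℝ)⁻¹ * ((M₀:ℝ) * aDW) := by field_simp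
            _ ≤ (M₀:ℝ)⁻¹ * rdistI c l 0 ((2:ℝ)^M₀) :=
              mul_le_mul_of_nonneg_left hstep2 (by positivity)
        exact (hDWmono aDW _ haDWle).trans haDW.le
  obtain ⟨hterm1, hterm2⟩ := hεB
  linarith
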